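/- The Fresnel sine integral S(X) = ∫₀^X sin(πx²/2) dx is nonnegative for all X ≥ 0. -/

import Mathlib

open Real intervalIntegral MeasureTheory

/-- Fresnel sine integral `S(X) = ∫₀^X sin(πx²/2) dx`. -/
noncomputable def fresnelS (X : ℝ) : ℝ := ∫ x in (0:ℝ)..X, Real.sin (π * x ^ 2 / 2)

private lemma contS : Continuous fun x : ℝ => Real.sin (π * x ^ 2 / 2) := by
  fun_prop

private lemma intS (a b : ℝ) :
    IntervalIntegrable (fun x => Real.sin (π * x ^ 2 / 2)) volume a b :=
  contS.intervalIntegrable a b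

/-- `s n = √(2n)`, the `n`-th zero of the integrand. -/
noncomputable def fresnelZero (n : ℕ) : ℝ := Real.sqrt (2 * n)

private lemma s_nonneg (n : ℕ) : 0 ≤ fresnelZero n := Real.sqrt_nonneg _

private lemma s_sq (n : ℕ) : fresnelZero n ^ 2 = 2 * n :=
  Real.sq_sqrt (by positivity)

private lemma s_mono {m n : ℕ} (h : m ≤ n) : fresnelZero m ≤ fresnelZero n := by
  apply Real.sqrt_le_sqrt
  have : (m : ℝ) ≤ n := by exact_mod_cast h
  linarith

private lemma sin_sign (n : ℕ) (t : ℝ) (h1 : (n : ℝ) ≤ t) (h2 : t ≤ n + 1) :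
    0 ≤ (-1 : ℝ) ^ n * Real.sin (π * t) := by
  have key : Real.sin (π * t) = (-1 : ℝ) ^ n * Real.sin (π * (t - n)) := by
    have h := Real.sin_add_int_mul_pi (π * (t - n)) (n : ℤ)
    rw [show π * (t - n) + (n : ℤ) * π = π * t by push_cast; ring] at h
    rw [h]
    norm_num
  have hs : 0 ≤ Real.sin (π * (t - n)) :=
    Real.sin_nonneg_of_nonneg_of_le_pi (by nlinarith [pi_pos]) (by nlinarith [pi_pos])
  rw [key, ← mul_assoc, ← pow_add]
  have : Even (n + n) := ⟨n, rfl⟩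
  rw [this.neg_one_pow, one_mul]
  exact hs

private lemma sq_mem {n : ℕ} {u : ℝ} (h1 : fresnelZero n ≤ u) (h2 : u ≤ fresnelZero (n + 1)) :
    (n : ℝ) ≤ u ^ 2 / 2 ∧ u ^ 2 / 2 ≤ n + 1 := by
  have hu0 : 0 ≤ u := le_trans (s_nonneg n) h1
  have hl : fresnelZero n ^ 2 ≤ u ^ 2 := by nlinarith [s_nonneg n]
  have hr : u ^ 2 ≤ fresnelZero (n + 1) ^ 2 := by nlinarith [s_nonneg (n + 1)]
  rw [s_sq] at hl
  rw [s_sq] at hr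
  push_cast at hl hr ⊢
  constructor <;> linarith

private lemma sin_nonneg_on (k : ℕ) {u : ℝ}
    (h1 : fresnelZero (2 * k) ≤ u) (h2 : u ≤ fresnelZero (2 * k + 1)) :
    0 ≤ Real.sin (π * u ^ 2 / 2) := by
  obtain ⟨ha, hb⟩ := sq_mem h1 h2
  have := sin_sign (2 * k) (u ^ 2 / 2) (by push_cast at ha ⊢; linarith) (by push_cast at hb ⊢; linarith)
  have hpow : ((-1 : ℝ)) ^ (2 * k) = 1 := by
    rw [pow_mul]; norm_num
  rw [hpow, one_mul] at this
  calc (0:ℝ) ≤ Real.sin (π * (u ^ 2 / 2)) := this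
    _ = Real.sin (π * u ^ 2 / 2) := by ring_nf

private lemma sin_nonpos_on (k : ℕ) {u : ℝ}
    (h1 : fresnelZero (2 * k + 1) ≤ u) (h2 : u ≤ fresnelZero (2 * k + 2)) :
    Real.sin (π * u ^ 2 / 2) ≤ 0 := by
  obtain ⟨ha, hb⟩ := sq_mem h1 (by simpa using h2)
  have := sin_sign (2 * k + 1) (u ^ 2 / 2) (by push_cast at ha ⊢; linarith) (by push_cast at hb ⊢; linarith)
  have hpow : ((-1 : ℝ)) ^ (2 * k + 1) = -1 := by
    rw [pow_succ, pow_mul]; norm_num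
  rw [hpow] at this
  have : Real.sin (π * (u ^ 2 / 2)) ≤ 0 := by linarith
  calc Real.sin (π * u ^ 2 / 2) = Real.sin (π * (u ^ 2 / 2)) := by ring_nf
    _ ≤ 0 := this

private lemma sqrt_pos2 (u : ℝ) : 0 < Real.sqrt (u ^ 2 + 2) :=
  Real.sqrt_pos.2 (by positivity)

private lemma cont2 : Continuous fun u : ℝ => u / Real.sqrt (u ^ 2 + 2) := by
  apply continuous_id.div (Real.continuous_sqrt.comp (by continuity))
  intro u
  exact (sqrt_pos2 u).ne'

/-- The pairing lemma: the integral over a full period `[√(4k), √(4k+4)]` is nonnegative. -/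
private lemma pair (k : ℕ) :
    0 ≤ ∫ x in fresnelZero (2 * k)..fresnelZero (2 * k + 2), Real.sin (π * x ^ 2 / 2) := by
  set a := fresnelZero (2 * k) with ha
  set b := fresnelZero (2 * k + 1) with hb
  set c := fresnelZero (2 * k + 2) with hc
  have hab : a ≤ b := s_mono (by omega)
  have hbc : b ≤ c := s_mono (by omega)
  -- substitution x = √(u² + 2)
  have hderiv : ∀ u ∈ Set.uIcc a b,
      HasDerivAt (fun u : ℝ => Real.sqrt (u ^ 2 + 2)) (u / Real.sqrt (u ^ 2 + 2)) u := by
    intro u _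
    have h1 : HasDerivAt (fun u : ℝ => u ^ 2 + 2) (2 * u) u := by
      simpa using ((hasDerivAt_pow 2 u).add_const 2)
    have h2 := (Real.hasDerivAt_sqrt (show u ^ 2 + 2 ≠ 0 by positivity)).comp u h1
    refine h2.congr_deriv ?_
    field_simp
  have hsub : (∫ x in b..c, Real.sin (π * x ^ 2 / 2))
      = ∫ u in a..b, ((fun x => Real.sin (π * x ^ 2 / 2)) ∘
          fun u => Real.sqrt (u ^ 2 + 2)) u * (u / Real.sqrt (u ^ 2 + 2)) := by
    rw [integral_comp_mul_deriv hderiv (cont2.continuousOn) contS]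
    have hfa : Real.sqrt (a ^ 2 + 2) = b := by
      rw [ha, s_sq, hb, fresnelZero]
      congr 1
      push_cast
      ring
    have hfb : Real.sqrt (b ^ 2 + 2) = c := by
      rw [hb, s_sq, hc, fresnelZero]
      congr 1
      push_cast
      ring
    rw [hfa, hfb]
  have hint2 : IntervalIntegrable (fun u : ℝ => ((fun x => Real.sin (π * x ^ 2 / 2)) ∘
      fun u => Real.sqrt (u ^ 2 + 2)) u * (u / Real.sqrt (u ^ 2 + 2))) volume a b := by
    apply Continuous.intervalIntegrable
    exact (contS.comp (Real.continuous_sqrt.comp (by continuity))).mul cont2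
  have hsplit : (∫ x in a..c, Real.sin (π * x ^ 2 / 2))
      = (∫ x in a..b, Real.sin (π * x ^ 2 / 2)) + ∫ x in b..c, Real.sin (π * x ^ 2 / 2) :=
    (integral_add_adjacent_intervals (intS a b) (intS b c)).symm
  rw [hsplit, hsub, ← integral_add (intS a b) hint2]
  apply intervalIntegral.integral_nonneg hab
  intro u hu
  have hsin : 0 ≤ Real.sin (π * u ^ 2 / 2) := sin_nonneg_on k hu.1 hu.2
  have hval : Real.sin (π * Real.sqrt (u ^ 2 + 2) ^ 2 / 2) = -Real.sin (π * u ^ 2 / 2) := by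
    rw [Real.sq_sqrt (by positivity : (0:ℝ) ≤ u ^ 2 + 2)]
    rw [show π * (u ^ 2 + 2) / 2 = π * u ^ 2 / 2 + π by ring]
    exact Real.sin_add_pi _
  show 0 ≤ Real.sin (π * u ^ 2 / 2) +
      Real.sin (π * Real.sqrt (u ^ 2 + 2) ^ 2 / 2) * (u / Real.sqrt (u ^ 2 + 2))
  rw [hval]
  have hu0 : 0 ≤ u := le_trans (s_nonneg _) hu.1
  have hfrac : u / Real.sqrt (u ^ 2 + 2) ≤ 1 := by
    rw [div_le_one (sqrt_pos2 u)]
    calc u = Real.sqrt (u ^ 2) := by rw [Real.sqrt_sq hu0]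
      _ ≤ Real.sqrt (u ^ 2 + 2) := Real.sqrt_le_sqrt (by linarith)
  have hfrac0 : 0 ≤ u / Real.sqrt (u ^ 2 + 2) := by positivity
  nlinarith

private lemma S_even (k : ℕ) : 0 ≤ fresnelS (fresnelZero (2 * k)) := by
  induction k with
  | zero =>
    simp [fresnelS, fresnelZero]
  | succ k ih =>
    have h2 : (2 * (k + 1)) = 2 * k + 2 := by omega
    rw [h2]
    have hsplit : fresnelS (fresnelZero (2 * k + 2))
        = fresnelS (fresnelZero (2 * k)) +
          ∫ x in fresnelZero (2 * k)..fresnelZero (2 * k + 2), Real.sin (π * x ^ 2 / 2) := by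
      rw [fresnelS, fresnelS]
      exact (integral_add_adjacent_intervals (intS _ _) (intS _ _)).symm
    rw [hsplit]
    have := pair k
    linarith

theorem fresnelS_nonneg {X : ℝ} (hX : 0 ≤ X) : 0 ≤ fresnelS X := by
  set n := ⌊X ^ 2 / 2⌋₊ with hn
  have h1 : (n : ℝ) ≤ X ^ 2 / 2 := Nat.floor_le (by positivity)
  have h2 : X ^ 2 / 2 < n + 1 := Nat.lt_floor_add_one _
  have hXsq : X = Real.sqrt (X ^ 2) := (Real.sqrt_sq hX).symm
  have hsn : fresnelZero n ≤ X := by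
    rw [hXsq]
    apply Real.sqrt_le_sqrt
    show (2 * (n : ℕ) : ℝ) ≤ X ^ 2
    linarith
  have hsn1 : X ≤ fresnelZero (n + 1) := by
    rw [hXsq]
    apply Real.sqrt_le_sqrt
    show X ^ 2 ≤ 2 * ((n : ℕ) + 1 : ℕ)
    push_cast
    linarith
  rcases Nat.even_or_odd n with ⟨k, hk⟩ | ⟨k, hk⟩
  · -- n = 2k : integrand is nonnegative on [s n, X]
    have hk' : n = 2 * k := by omega
    have hsplit : fresnelS X = fresnelS (fresnelZero n) +
        ∫ x in fresnelZero n..X, Real.sin (π * x ^ 2 / 2) := by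
      rw [fresnelS, fresnelS]
      exact (integral_add_adjacent_intervals (intS _ _) (intS _ _)).symm
    rw [hsplit]
    have hpos : 0 ≤ ∫ x in fresnelZero n..X, Real.sin (π * x ^ 2 / 2) := by
      apply intervalIntegral.integral_nonneg hsn
      intro u hu
      apply sin_nonneg_on k
      · rw [← hk']; exact hu.1
      · rw [show 2 * k + 1 = n + 1 by omega]; exact le_trans hu.2 hsn1
    have := S_even k
    rw [← hk'] at this
    linarith
  · -- n = 2k+1 : integrand is nonpositive on [X, s (n+1)]
    have hk' : n = 2 * k + 1 := hk
    have hsplit : fresnelS (fresnelZero (n + 1)) = fresnelS X +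
        ∫ x in X..fresnelZero (n + 1), Real.sin (π * x ^ 2 / 2) := by
      rw [fresnelS, fresnelS]
      exact (integral_add_adjacent_intervals (intS _ _) (intS _ _)).symm
    have hneg : (∫ x in X..fresnelZero (n + 1), Real.sin (π * x ^ 2 / 2)) ≤ 0 := by
      have h0 : 0 ≤ ∫ x in X..fresnelZero (n + 1), -Real.sin (π * x ^ 2 / 2) := by
        apply intervalIntegral.integral_nonneg hsn1
        intro u hu
        rw [neg_nonneg]
        apply sin_nonpos_on k
        · rw [show 2 * k + 1 = n by omega]; exact le_trans hsn hu.1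
        · rw [show 2 * k + 2 = n + 1 by omega]; exact hu.2
      rw [intervalIntegral.integral_neg] at h0
      linarith
    have hS : 0 ≤ fresnelS (fresnelZero (n + 1)) := by
      have := S_even (k + 1)
      rw [show 2 * (k + 1) = n + 1 by omega] at this
      exact this
    rw [hsplit] at hS
    linarith
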